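/- Let g be a uniformly Lipschitz generator. Then the following two conditions are equivalent. (a) There exists a constant C > 0 such that for all t ∈ [0,T], all y ∈ ℝⁿ and all z ∈ ℝ^{n×d}: 4⟨y⁺, g(t, −y⁻, z)⟩ ≤ 2·∑_{k=1}^{n} 1_{y_k>0}·|z_k|² + C·|y⁺|². (b) For every k ∈ {1,…,n}, every t ∈ [0,T], every δ ∈ ℝⁿ with δ ≥ 0 and δ_k = 0, and every ζ ∈ ℝ^{n×d} with ζ_k = 0 (k-th row zero), one has g_k(t, −δ, ζ) ≤ 0. (This is the deterministic core of the characterization of nonpositivity of solutions to multidimensional BSDEs, obtained from the nonnegative case by replacing g with ḡ(t,y,z) := −g(t,−y,−z).) -/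

import Mathlib

open scoped RealInnerProductSpace

noncomputable section

/-- `ℝⁿ` with the Euclidean norm. -/
abbrev Vec (n : ℕ) := EuclideanSpace ℝ (Fin n)

/-- Real `n × d` matrices with the Frobenius norm. -/
abbrev Mat (n d : ℕ) := EuclideanSpace ℝ (Fin n × Fin d)

/-- The `k`-th row of a matrix. -/
def row {n d : ℕ} (z : Mat n d) (k : Fin n) : Vec d := WithLp.toLp 2 (fun j => z (k, j))

/-- Componentwise positive part. -/
def pos {n : ℕ} (x : Vec n) : Vec n := WithLp.toLp 2 (fun i => max (x i) 0)

/-- Componentwise negative part. -/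
def neg {n : ℕ} (x : Vec n) : Vec n := WithLp.toLp 2 (fun i => max (-(x i)) 0)

/-- A generator is uniformly Lipschitz on `[0,T]`. -/
def UniformlyLipschitz {n d : ℕ} (T : ℝ)
    (g : ℝ → Vec n → Mat n d → Vec n) : Prop :=
  ∃ L : ℝ, 0 ≤ L ∧ ∀ t ∈ Set.Icc (0:ℝ) T, ∀ y y' : Vec n, ∀ z z' : Mat n d,
    ‖g t y z - g t y' z'‖ ≤ L * (‖y - y'‖ + ‖z - z'‖)

lemma euclid_norm_sq {ι : Type*} [Fintype ι] (x : EuclideanSpace ℝ ι) :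
    ‖x‖ ^ 2 = ∑ i, (x i) ^ 2 := by
  rw [EuclideanSpace.norm_eq, Real.sq_sqrt (by positivity)]
  simp [sq_abs]

lemma euclid_abs_coord_le {ι : Type*} [Fintype ι] (x : EuclideanSpace ℝ ι) (i : ι) :
    |x i| ≤ ‖x‖ := by
  rw [EuclideanSpace.norm_eq, ← Real.sqrt_sq (abs_nonneg (x i))]
  apply Real.sqrt_le_sqrt
  rw [sq_abs]
  have := Finset.single_le_sum (f := fun j => x j ^ 2) (fun j _ => by positivity)
    (Finset.mem_univ i)
  simpa [sq_abs] using this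

lemma euclid_inner_eq {ι : Type*} [Fintype ι] (x y : EuclideanSpace ℝ ι) :
    ⟪x, y⟫ = ∑ i, x i * y i := by
  simp [PiLp.inner_apply, RCLike.inner_apply, mul_comm]

/-- the deterministic core of the characterization of nonpositivity of
solutions to multidimensional BSDEs. -/
theorem nonpositivity_criterion
    {n d : ℕ} (hn : 0 < n) (hd : 0 < d) (T : ℝ) (hT : 0 < T)
    (g : ℝ → Vec n → Mat n d → Vec n) (hg : UniformlyLipschitz T g) :
    (∃ C : ℝ, 0 < C ∧ ∀ t ∈ Set.Icc (0:ℝ) T, ∀ y : Vec n, ∀ z : Mat n d,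
        4 * ⟪pos y, g t (-(neg y)) z⟫ ≤
          2 * ∑ k : Fin n, (if 0 < y k then (1:ℝ) else 0) * ‖row z k‖ ^ 2
            + C * ‖pos y‖ ^ 2)
    ↔
    (∀ k : Fin n, ∀ t ∈ Set.Icc (0:ℝ) T, ∀ δ : Vec n,
        (∀ i, 0 ≤ δ i) → δ k = 0 →
        ∀ ζ : Mat n d, row ζ k = 0 → g t (-δ) ζ k ≤ 0) := by
  constructor
  · rintro ⟨C, hC, hineq⟩ k t ht δ hδ hδk ζ hζ
    set G := g t (-δ) ζ k with hG
    have key : ∀ ε : ℝ, 0 < ε → 4 * G ≤ C * ε := by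
      intro ε hε
      set y : Vec n := WithLp.toLp 2 (fun i => if i = k then ε else -δ i) with hy
      have hyi : ∀ i, y i = if i = k then ε else -δ i := fun i => rfl
      have hposy : ∀ i, pos y i = if i = k then ε else 0 := by
        intro i
        by_cases hik : i = k
        · simp [pos, hyi, hik, le_of_lt hε]
        · simp [pos, hyi, hik, hδ i]
      have hnegy : neg y = δ := by
        ext i
        by_cases hik : i = k
        · subst hik
          simp [neg, hyi, le_of_lt hε, hδk]
        · simp [neg, hyi, hik, hδ i]
      have h1 := hineq t ht y ζ
      rw [hnegy] at h1
      have hinner : ⟪pos y, g t (-δ) ζ⟫ = ε * G := by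
        rw [euclid_inner_eq]
        rw [Finset.sum_eq_single k]
        · rw [hposy k]; simp [hG]
        · intro i _ hik; rw [hposy i]; simp [hik]
        · intro h; exact absurd (Finset.mem_univ k) h
      have hsum : ∑ k' : Fin n, (if 0 < y k' then (1:ℝ) else 0) * ‖row ζ k'‖ ^ 2 = 0 := by
        apply Finset.sum_eq_zero
        intro i _
        by_cases hik : i = k
        · subst hik; rw [hζ]; simp
        · have : y i = -δ i := by simp [hyi, hik]
          have : ¬ (0 < y i) := by rw [this]; simp; exact hδ i
          simp [this]
      have hnp : ‖pos y‖ ^ 2 = ε ^ 2 := by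
        rw [euclid_norm_sq]
        rw [Finset.sum_eq_single k]
        · rw [hposy k]; simp
        · intro i _ hik; rw [hposy i]; simp [hik]
        · intro h; exact absurd (Finset.mem_univ k) h
      rw [hinner, hsum, hnp] at h1
      have hε2 : C * ε ^ 2 = (C * ε) * ε := by ring
      nlinarith
    by_contra h
    push_neg at h
    have := key (G / C) (div_pos h hC)
    rw [mul_div_cancel₀ _ (ne_of_gt hC)] at this
    linarith
  · intro hb
    obtain ⟨L, hL, hLip⟩ := hg
    refine ⟨2 * L ^ 2 + 1, by positivity, ?_⟩
    intro t ht y z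
    rw [euclid_inner_eq, euclid_norm_sq]
    rw [Finset.mul_sum, Finset.mul_sum, Finset.mul_sum, ← Finset.sum_add_distrib]
    apply Finset.sum_le_sum
    intro k _
    by_cases hk : 0 < y k
    · -- main case
      have hposk : pos y k = y k := by simp [pos, le_of_lt hk]
      set ζ : Mat n d := WithLp.toLp 2 (fun p => if p.1 = k then 0 else z p) with hζdef
      have hζrow : row ζ k = 0 := by ext j; simp [row, hζdef]
      have hnegk : neg y k = 0 := by simp [neg, le_of_lt hk]
      have hδ : ∀ i, 0 ≤ neg y i := fun i => le_max_right _ _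
      have hg0 : g t (-(neg y)) ζ k ≤ 0 := hb k t ht (neg y) hδ hnegk ζ hζrow
      have hdist : ‖z - ζ‖ ^ 2 = ‖row z k‖ ^ 2 := by
        rw [euclid_norm_sq, euclid_norm_sq]
        rw [Fintype.sum_prod_type]
        rw [Finset.sum_eq_single k]
        · apply Finset.sum_congr rfl
          intro j _
          have : (z - ζ) (k, j) = z (k, j) := by simp [hζdef]
          rw [this]; rfl
        · intro i _ hik
          apply Finset.sum_eq_zero
          intro j _
          have : (z - ζ) (i, j) = 0 := by simp [hζdef, hik]
          rw [this]; simp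
        · intro h; exact absurd (Finset.mem_univ k) h
      have habs : |g t (-(neg y)) z k - g t (-(neg y)) ζ k| ≤ L * ‖z - ζ‖ := by
        calc |g t (-(neg y)) z k - g t (-(neg y)) ζ k|
            = |(g t (-(neg y)) z - g t (-(neg y)) ζ) k| := by simp
          _ ≤ ‖g t (-(neg y)) z - g t (-(neg y)) ζ‖ := euclid_abs_coord_le _ _
          _ ≤ L * (‖(-(neg y)) - (-(neg y))‖ + ‖z - ζ‖) := hLip t ht _ _ _ _
          _ = L * ‖z - ζ‖ := by simp
      have habs' : g t (-(neg y)) z k - g t (-(neg y)) ζ k ≤ L * ‖z - ζ‖ :=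
        le_trans (le_abs_self _) habs
      have hs : (0:ℝ) ≤ ‖z - ζ‖ := norm_nonneg _
      have hbnn : (0:ℝ) ≤ ‖row z k‖ := norm_nonneg _
      rw [hposk, if_pos hk]
      nlinarith [sq_nonneg (L * y k - ‖z - ζ‖), mul_pos hk hk, hk.le,
        mul_le_mul_of_nonneg_left habs' hk.le, mul_nonneg hk.le hs, sq_nonneg (y k)]
    · have hposk : pos y k = 0 := max_eq_right (not_lt.mp hk)
      rw [hposk, if_neg hk]
      simp
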